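/- Define 𝔅 := {b ∈ ℝ^d : 𝒫(b) ≠ ∅} and, for b ∈ 𝔅, define v(b) := sup over p ∈ 𝒫(b) of Σ_{a∈𝒜} p(a)·Q(a). Then there exists a constant H ≥ 0 such that |v(b) − v(b')| ≤ H·‖b − b'‖_∞ for all b, b' ∈ 𝔅. -/

import Mathlib

open Finset

section Cone

variable {ι : Type*} [Fintype ι] [DecidableEq ι]

/-- Dot product on `ι → ℝ`. -/
def pdot (x y : ι → ℝ) : ℝ := ∑ j, x j * y j

lemma pdot_add_right (n z g : ι → ℝ) : pdot n (z + g) = pdot n z + pdot n g := by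
  simp [pdot, mul_add, Finset.sum_add_distrib]

lemma pdot_smul_right (n g : ι → ℝ) (t : ℝ) : pdot n (t • g) = t * pdot n g := by
  simp [pdot, Finset.mul_sum, mul_left_comm]

lemma pdot_sub_right (n z g : ι → ℝ) : pdot n (z - g) = pdot n z - pdot n g := by
  simp [pdot, mul_sub, Finset.sum_sub_distrib]

lemma pdot_smul_left (n g : ι → ℝ) (t : ℝ) : pdot (t • n) g = t * pdot n g := by
  simp [pdot, Finset.mul_sum, mul_assoc]

lemma pdot_sub_left (n z g : ι → ℝ) : pdot (n - z) g = pdot n g - pdot z g := by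
  simp [pdot, sub_mul, Finset.sum_sub_distrib]

lemma pdot_single (i : ι) (c : ℝ) (x : ι → ℝ) : pdot (Pi.single i c) x = c * x i := by
  rw [pdot, Finset.sum_eq_single i]
  · simp
  · intro j _ hj; simp [Pi.single_apply, hj]
  · intro h; exact absurd (Finset.mem_univ i) h

/-- The cone generated by a list of vectors. -/
def listCone : List (ι → ℝ) → Set (ι → ℝ)
  | [] => {0}
  | g :: L => {x | ∃ t : ℝ, 0 ≤ t ∧ ∃ z ∈ listCone L, x = z + t • g}

/-- Weyl's theorem: a finitely generated cone is an intersection of finitely many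
halfspaces (Fourier–Motzkin induction on the generators). -/
theorem listCone_polyhedral (L : List (ι → ℝ)) :
    ∃ N : Finset (ι → ℝ), ∀ x, x ∈ listCone L ↔ ∀ n ∈ N, pdot n x ≤ 0 := by
  classical
  induction L with
  | nil =>
    refine ⟨(univ.image fun i => Pi.single i (1:ℝ)) ∪ (univ.image fun i => Pi.single i (-1:ℝ)), ?_⟩
    intro x
    constructor
    · intro hx
      have hx0 : x = 0 := hx
      subst hx0
      intro n _
      simp [pdot]
    · intro h
      have h0 : ∀ i, x i = 0 := by
        intro i
        have h1 : pdot (Pi.single i (1:ℝ)) x ≤ 0 := by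
          apply h; exact Finset.mem_union_left _ (Finset.mem_image_of_mem _ (Finset.mem_univ i))
        have h2 : pdot (Pi.single i (-1:ℝ)) x ≤ 0 := by
          apply h; exact Finset.mem_union_right _ (Finset.mem_image_of_mem _ (Finset.mem_univ i))
        rw [pdot_single] at h1 h2
        nlinarith
      exact funext h0
  | cons g L ih =>
    obtain ⟨N, hN⟩ := ih
    refine ⟨(N.filter fun n => pdot n g ≤ 0) ∪
      (((N.filter fun j => 0 < pdot j g) ×ˢ (N.filter fun k => pdot k g < 0)).image
        fun jk => pdot jk.1 g • jk.2 - pdot jk.2 g • jk.1), ?_⟩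
    intro x
    constructor
    · rintro ⟨t, ht, z, hz, rfl⟩
      intro n hn
      rcases Finset.mem_union.1 hn with hn | hn
      · rw [Finset.mem_filter] at hn
        rw [pdot_add_right, pdot_smul_right]
        have := (hN z).1 hz n hn.1
        nlinarith
      · rw [Finset.mem_image] at hn
        obtain ⟨⟨j, k⟩, hjk, rfl⟩ := hn
        rw [Finset.mem_product, Finset.mem_filter, Finset.mem_filter] at hjk
        obtain ⟨⟨hjN, hj⟩, hkN, hk⟩ := hjk
        have hjz := (hN z).1 hz j hjN
        have hkz := (hN z).1 hz k hkN
        rw [pdot_sub_left, pdot_smul_left, pdot_smul_left,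
          pdot_add_right, pdot_add_right, pdot_smul_right, pdot_smul_right]
        nlinarith
    · intro h
      -- find a good coefficient t
      have key : ∃ t, 0 ≤ t ∧ ∀ n ∈ N, pdot n x ≤ t * pdot n g := by
        by_cases hP : (N.filter fun j => 0 < pdot j g).Nonempty
        · set P := N.filter fun j => 0 < pdot j g with hPdef
          refine ⟨max 0 (P.sup' hP fun j => pdot j x / pdot j g), le_max_left _ _, ?_⟩
          intro n hn
          rcases lt_trichotomy (pdot n g) 0 with hng | hng | hng
          · -- pdot n g < 0
            have hnx : pdot n x ≤ 0 := by
              apply h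
              exact Finset.mem_union_left _ (Finset.mem_filter.2 ⟨hn, le_of_lt hng⟩)
            have hub : ∀ j ∈ P, pdot j x / pdot j g ≤ pdot n x / pdot n g := by
              intro j hj
              rw [hPdef, Finset.mem_filter] at hj
              obtain ⟨hjN, hjg⟩ := hj
              have hpair : pdot (pdot j g • n - pdot n g • j) x ≤ 0 := by
                apply h
                apply Finset.mem_union_right
                apply Finset.mem_image.2
                exact ⟨(j, n), Finset.mem_product.2
                  ⟨Finset.mem_filter.2 ⟨hjN, hjg⟩, Finset.mem_filter.2 ⟨hn, hng⟩⟩, rfl⟩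
              rw [pdot_sub_left, pdot_smul_left, pdot_smul_left] at hpair
              rw [le_div_iff_of_neg hng, div_mul_eq_mul_div, le_div_iff₀ hjg]
              nlinarith
            have h0q : 0 ≤ pdot n x / pdot n g := by
              rw [← neg_div_neg_eq]
              exact div_nonneg (by linarith) (by linarith)
            have hmax : max 0 (P.sup' hP fun j => pdot j x / pdot j g) ≤ pdot n x / pdot n g :=
              max_le h0q (Finset.sup'_le _ _ hub)
            calc pdot n x = (pdot n x / pdot n g) * pdot n g :=
                  (div_mul_cancel₀ _ (ne_of_lt hng)).symm
              _ ≤ max 0 (P.sup' hP fun j => pdot j x / pdot j g) * pdot n g :=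
                  mul_le_mul_of_nonpos_right hmax (le_of_lt hng)
          · -- pdot n g = 0
            have hnx : pdot n x ≤ 0 := by
              apply h
              exact Finset.mem_union_left _ (Finset.mem_filter.2 ⟨hn, le_of_eq hng⟩)
            rw [hng, mul_zero]; exact hnx
          · -- 0 < pdot n g
            have hmem : n ∈ P := Finset.mem_filter.2 ⟨hn, hng⟩
            have := Finset.le_sup' (fun j => pdot j x / pdot j g) hmem
            have h2 : pdot n x / pdot n g ≤ max 0 (P.sup' hP fun j => pdot j x / pdot j g) :=
              le_trans this (le_max_right _ _)
            rw [div_le_iff₀ hng] at h2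
            linarith [h2]
        · refine ⟨0, le_rfl, ?_⟩
          intro n hn
          have hng : pdot n g ≤ 0 := by
            by_contra hc
            exact hP ⟨n, Finset.mem_filter.2 ⟨hn, lt_of_not_ge hc⟩⟩
          have hnx : pdot n x ≤ 0 := by
            apply h
            exact Finset.mem_union_left _ (Finset.mem_filter.2 ⟨hn, hng⟩)
          rw [zero_mul]; exact hnx
      obtain ⟨t, ht, htn⟩ := key
      refine ⟨t, ht, x - t • g, ?_, by abel⟩
      rw [hN]
      intro n hn
      rw [pdot_sub_right, pdot_smul_right]
      linarith [htn n hn]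

end Cone
section Cone2

variable {ι : Type*} [Fintype ι] [DecidableEq ι]

lemma listCone_append (L1 L2 : List (ι → ℝ)) (x : ι → ℝ) :
    x ∈ listCone (L1 ++ L2) ↔ ∃ y ∈ listCone L1, ∃ z ∈ listCone L2, x = y + z := by
  induction L1 generalizing x with
  | nil =>
    simp only [List.nil_append]
    constructor
    · intro hx; exact ⟨0, rfl, x, hx, (zero_add x).symm⟩
    · rintro ⟨y, hy, z, hz, rfl⟩
      have : y = 0 := hy
      subst this; rw [zero_add]; exact hz
  | cons g L1 ih =>
    constructor
    · rintro ⟨t, ht, u, hu, rfl⟩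
      obtain ⟨y, hy, z, hz, rfl⟩ := ih u |>.1 hu
      exact ⟨y + t • g, ⟨t, ht, y, hy, rfl⟩, z, hz, by abel⟩
    · rintro ⟨y, ⟨t, ht, y', hy', rfl⟩, z, hz, rfl⟩
      exact ⟨t, ht, y' + z, (ih _).2 ⟨y', hy', z, hz, rfl⟩, by abel⟩

lemma listCone_singleton (g x : ι → ℝ) :
    x ∈ listCone [g] ↔ ∃ t : ℝ, 0 ≤ t ∧ x = t • g := by
  constructor
  · rintro ⟨t, ht, z, hz, rfl⟩
    have : z = 0 := hz
    subst this
    exact ⟨t, ht, by rw [zero_add]⟩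
  · rintro ⟨t, ht, rfl⟩
    exact ⟨t, ht, 0, rfl, (zero_add _).symm⟩

lemma listCone_map {α : Type*} (g : α → ι → ℝ) (l : List α) (hl : l.Nodup) (x : ι → ℝ) :
    x ∈ listCone (l.map g) ↔
      ∃ c : α → ℝ, (∀ a ∈ l, 0 ≤ c a) ∧ x = (l.map fun a => c a • g a).sum := by
  classical
  induction l generalizing x with
  | nil =>
    simp only [List.map_nil, List.sum_nil]
    constructor
    · intro hx; exact ⟨fun _ => 0, by simp, hx⟩
    · rintro ⟨c, _, rfl⟩; rfl
  | cons a l ih =>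
    obtain ⟨hal, hlnd⟩ := List.nodup_cons.1 hl
    constructor
    · rintro ⟨t, ht, z, hz, rfl⟩
      obtain ⟨c, hc, rfl⟩ := (ih hlnd z).1 hz
      refine ⟨Function.update c a t, ?_, ?_⟩
      · intro b hb
        rcases List.mem_cons.1 hb with rfl | hb
        · rw [Function.update_self]; exact ht
        · rw [Function.update_of_ne (ne_of_mem_of_not_mem hb hal)]; exact hc b hb
      · rw [List.map_cons, List.sum_cons, Function.update_self]
        have : (l.map fun b => Function.update c a t b • g b) = l.map fun b => c b • g b :=
          List.map_congr_left fun b hb => by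
            rw [Function.update_of_ne (ne_of_mem_of_not_mem hb hal)]
        rw [this]; abel
    · rintro ⟨c, hc, rfl⟩
      simp only [List.map_cons, List.sum_cons]
      refine ⟨c a, hc a (List.mem_cons_self), (l.map fun b => c b • g b).sum,
        (ih hlnd _).2 ⟨c, fun b hb => hc b (List.mem_cons_of_mem a hb), rfl⟩, by abel⟩

end Cone2
section Emb

variable {d : ℕ}

/-- Embed `(b, w, s)` into `(Fin d ⊕ Bool) → ℝ`. -/
def emb (b : Fin d → ℝ) (w s : ℝ) : (Fin d ⊕ Bool) → ℝ :=
  Sum.elim b (fun t => if t then s else w)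

lemma emb_add (b b' : Fin d → ℝ) (w w' s s' : ℝ) :
    emb b w s + emb b' w' s' = emb (b + b') (w + w') (s + s') := by
  funext j
  rcases j with i | t
  · rfl
  · cases t <;> simp [emb]

lemma emb_smul (t : ℝ) (b : Fin d → ℝ) (w s : ℝ) :
    t • emb b w s = emb (t • b) (t * w) (t * s) := by
  funext j
  rcases j with i | u
  · rfl
  · cases u <;> simp [emb]

lemma emb_sum {α : Type*} (S : Finset α) (f : α → Fin d → ℝ) (u v : α → ℝ) :
    ∑ a ∈ S, emb (f a) (u a) (v a) = emb (∑ a ∈ S, f a) (∑ a ∈ S, u a) (∑ a ∈ S, v a) := by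
  funext j
  rw [Finset.sum_apply]
  rcases j with i | t
  · simp [emb]
  · cases t <;> simp [emb]

lemma pdot_emb (n : (Fin d ⊕ Bool) → ℝ) (b : Fin d → ℝ) (w s : ℝ) :
    pdot n (emb b w s) =
      (∑ i, n (Sum.inl i) * b i) + n (Sum.inr false) * w + n (Sum.inr true) * s := by
  rw [pdot, Fintype.sum_sum_type]
  simp [emb]
  ring

lemma emb_single_sum (e : Fin d → ℝ) :
    ∑ i, e i • emb (Pi.single i (1:ℝ)) 0 0 = emb (fun i => e i) 0 0 := by
  funext j
  rw [Finset.sum_apply]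
  rcases j with i | t
  · simp only [Pi.smul_apply, smul_eq_mul, emb, Sum.elim_inl, Pi.single_apply, mul_ite,
      mul_one, mul_zero]
    rw [Finset.sum_ite_eq]
    simp
  · cases t <;> simp [emb]

/-- The generator list of the hypograph cone. -/
noncomputable def genList (d : ℕ) (𝒜 : Finset (Fin d → ℝ)) (Q : (Fin d → ℝ) → ℝ) :
    List ((Fin d ⊕ Bool) → ℝ) :=
  (𝒜.toList.map fun a => emb a (Q a) 1) ++
    ((List.finRange d).map fun i => emb (Pi.single i 1) 0 0) ++
    [emb 0 (-1) 0]

lemma feas_iff (d : ℕ) (𝒜 : Finset (Fin d → ℝ)) (Q : (Fin d → ℝ) → ℝ)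
    (b : Fin d → ℝ) (w : ℝ) :
    emb b w 1 ∈ listCone (genList d 𝒜 Q) ↔
      ∃ p : (Fin d → ℝ) → ℝ, (∀ a ∈ 𝒜, 0 ≤ p a) ∧ (∑ a ∈ 𝒜, p a) = 1 ∧
        (∀ i, (∑ a ∈ 𝒜, p a * a i) ≤ b i) ∧ w ≤ ∑ a ∈ 𝒜, p a * Q a := by
  classical
  rw [genList, listCone_append, ]
  constructor
  · rintro ⟨y, hy, z, hz, hxyz⟩
    rw [listCone_append] at hy
    obtain ⟨xA, hxA, xE, hxE, rfl⟩ := hy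
    obtain ⟨tD, htD, rfl⟩ := (listCone_singleton _ _).1 hz
    obtain ⟨c, hc, rfl⟩ := (listCone_map _ _ 𝒜.nodup_toList _).1 hxA
    obtain ⟨e, he, rfl⟩ := (listCone_map _ _ (List.nodup_finRange d) _).1 hxE
    -- rewrite the three pieces as emb's
    have hA : (𝒜.toList.map fun a => c a • emb a (Q a) 1).sum =
        emb (∑ a ∈ 𝒜, c a • a) (∑ a ∈ 𝒜, c a * Q a) (∑ a ∈ 𝒜, c a) := by
      have h1 : (𝒜.toList.map fun a => c a • emb a (Q a) 1).sum =
          ∑ a ∈ 𝒜, c a • emb a (Q a) 1 := by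
        rw [← List.sum_toFinset _ 𝒜.nodup_toList, Finset.toList_toFinset]
      rw [h1]
      have h2 : ∀ a : Fin d → ℝ, c a • emb a (Q a) 1 = emb (c a • a) (c a * Q a) (c a) := by
        intro a; rw [emb_smul, mul_one]
      simp only [h2]
      exact emb_sum _ _ _ _
    have hE : ((List.finRange d).map fun i => e i • emb (Pi.single i 1) 0 0).sum =
        emb (fun i => e i) 0 0 := by
      have h1 : ((List.finRange d).map fun i => e i • emb (Pi.single i 1) 0 0).sum =
          ∑ i, e i • emb (Pi.single i 1) 0 0 := by
        rw [Fin.sum_univ_def]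
      rw [h1, emb_single_sum]
    have hD : tD • emb (0 : Fin d → ℝ) (-1) 0 = emb 0 (-tD) 0 := by
      rw [emb_smul, smul_zero, mul_zero]; ring_nf
    rw [hA, hE, hD, emb_add, emb_add] at hxyz
    have hb : b = ∑ a ∈ 𝒜, c a • a + (fun i => e i) + 0 :=
      funext fun i => congrFun hxyz (Sum.inl i)
    have hw : w = (∑ a ∈ 𝒜, c a * Q a) + 0 + (-tD) := congrFun hxyz (Sum.inr false)
    have hs : (1:ℝ) = (∑ a ∈ 𝒜, c a) + 0 + 0 := congrFun hxyz (Sum.inr true)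
    refine ⟨c, fun a ha => hc a (Finset.mem_toList.2 ha), ?_, ?_, ?_⟩
    · rw [add_zero, add_zero] at hs; exact hs.symm
    · intro i
      have := congrFun hb i
      simp only [Pi.add_apply, Pi.zero_apply, add_zero, Finset.sum_apply, Pi.smul_apply,
        smul_eq_mul] at this
      have hei : 0 ≤ e i := he i (List.mem_finRange i)
      linarith [this]
    · rw [add_zero] at hw; linarith [hw]
  · rintro ⟨p, hp, hp1, hpb, hpQ⟩
    refine ⟨emb (∑ a ∈ 𝒜, p a • a) (∑ a ∈ 𝒜, p a * Q a) 1 +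
        emb (fun i => b i - ∑ a ∈ 𝒜, p a * a i) 0 0, ?_, ((∑ a ∈ 𝒜, p a * Q a) - w) • emb 0 (-1) 0,
        ?_, ?_⟩
    · rw [listCone_append]
      refine ⟨emb (∑ a ∈ 𝒜, p a • a) (∑ a ∈ 𝒜, p a * Q a) 1, ?_,
        emb (fun i => b i - ∑ a ∈ 𝒜, p a * a i) 0 0, ?_, rfl⟩
      · rw [listCone_map _ _ 𝒜.nodup_toList]
        refine ⟨p, fun a ha => hp a (Finset.mem_toList.1 ha), ?_⟩
        have h1 : (𝒜.toList.map fun a => p a • emb a (Q a) 1).sum =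
            ∑ a ∈ 𝒜, p a • emb a (Q a) 1 := by
          rw [← List.sum_toFinset _ 𝒜.nodup_toList, Finset.toList_toFinset]
        rw [h1]
        have h2 : ∀ a : Fin d → ℝ, p a • emb a (Q a) 1 = emb (p a • a) (p a * Q a) (p a) := by
          intro a; rw [emb_smul, mul_one]
        simp only [h2, emb_sum]
        rw [hp1]
      · rw [listCone_map _ _ (List.nodup_finRange d)]
        refine ⟨fun i => b i - ∑ a ∈ 𝒜, p a * a i, fun i _ => by show (0:ℝ) ≤ b i - ∑ a ∈ 𝒜, p a * a i; linarith [hpb i], ?_⟩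
        have h1 : ((List.finRange d).map fun i =>
            (b i - ∑ a ∈ 𝒜, p a * a i) • emb (Pi.single i 1) 0 0).sum =
            ∑ i, (b i - ∑ a ∈ 𝒜, p a * a i) • emb (Pi.single i 1) 0 0 := by
          rw [Fin.sum_univ_def]
        rw [h1, emb_single_sum]
    · rw [listCone_singleton]
      exact ⟨_, by linarith, rfl⟩
    · rw [emb_smul, emb_add, emb_add, smul_zero, mul_zero]
      funext j
      rcases j with i | t
      · show b i = _
        simp only [emb, Sum.elim_inl, Pi.add_apply, Finset.sum_apply, Pi.smul_apply,
          smul_eq_mul, Pi.zero_apply]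
        ring
      · cases t
        · show w = _
          simp only [emb, Sum.elim_inr]
          norm_num
        · show (1:ℝ) = _
          simp only [emb, Sum.elim_inr]
          norm_num

end Emb
/-- Hoffman-lemma step in the proof of Theorem 3 of the paper: the worst-case expectation
`v(b) = sup_{p ∈ 𝒫(b)} Σ_{a ∈ 𝒜} p(a)·Q(a)` is Lipschitz in the right-hand side `b` of the
moment constraint, uniformly over `𝔅 = {b : 𝒫(b) ≠ ∅}`, with respect to the sup norm
(which is the default norm on `Fin d → ℝ`). -/
theorem stmt_14 (d : ℕ) (hd : 0 < d) (𝒜 : Finset (Fin d → ℝ)) (h𝒜 : 𝒜.Nonempty)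
    (Q : (Fin d → ℝ) → ℝ)
    (v : (Fin d → ℝ) → ℝ)
    (hv : ∀ b : Fin d → ℝ,
      v b = sSup {w : ℝ | ∃ p : (Fin d → ℝ) → ℝ,
        ((∀ a ∈ 𝒜, 0 ≤ p a) ∧ (∑ a ∈ 𝒜, p a) = 1 ∧ ∀ i, (∑ a ∈ 𝒜, p a * a i) ≤ b i) ∧
        w = ∑ a ∈ 𝒜, p a * Q a}) :
    ∃ H : ℝ, 0 ≤ H ∧ ∀ b b' : Fin d → ℝ,
      (∃ p : (Fin d → ℝ) → ℝ,
        (∀ a ∈ 𝒜, 0 ≤ p a) ∧ (∑ a ∈ 𝒜, p a) = 1 ∧ ∀ i, (∑ a ∈ 𝒜, p a * a i) ≤ b i) →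
      (∃ p : (Fin d → ℝ) → ℝ,
        (∀ a ∈ 𝒜, 0 ≤ p a) ∧ (∑ a ∈ 𝒜, p a) = 1 ∧ ∀ i, (∑ a ∈ 𝒜, p a * a i) ≤ b' i) →
      |v b - v b'| ≤ H * ‖b - b'‖ := by
  classical
  obtain ⟨N, hN⟩ := listCone_polyhedral (genList d 𝒜 Q)
  set S : (Fin d → ℝ) → Set ℝ := fun b => {w : ℝ | ∃ p : (Fin d → ℝ) → ℝ,
      ((∀ a ∈ 𝒜, 0 ≤ p a) ∧ (∑ a ∈ 𝒜, p a) = 1 ∧ ∀ i, (∑ a ∈ 𝒜, p a * a i) ≤ b i) ∧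
      w = ∑ a ∈ 𝒜, p a * Q a} with hS
  -- uniform upper bound on S b
  have hbdd : ∀ b : Fin d → ℝ, BddAbove (S b) := by
    intro b
    refine ⟨𝒜.sup' h𝒜 Q, ?_⟩
    rintro w ⟨p, ⟨hp, hp1, _⟩, rfl⟩
    calc ∑ a ∈ 𝒜, p a * Q a ≤ ∑ a ∈ 𝒜, p a * 𝒜.sup' h𝒜 Q :=
          Finset.sum_le_sum fun a ha =>
            mul_le_mul_of_nonneg_left (Finset.le_sup' Q ha) (hp a ha)
      _ = 𝒜.sup' h𝒜 Q := by rw [← Finset.sum_mul, hp1, one_mul]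
  set H : ℝ := ∑ n ∈ N, (if 0 < n (Sum.inr false)
      then (∑ i, |n (Sum.inl i)|) / n (Sum.inr false) else 0) with hH
  have hHterm : ∀ n ∈ N, (0:ℝ) ≤ (if 0 < n (Sum.inr false)
      then (∑ i, |n (Sum.inl i)|) / n (Sum.inr false) else 0) := by
    intro n _
    split
    · next h => exact div_nonneg (Finset.sum_nonneg fun i _ => abs_nonneg _) (le_of_lt h)
    · exact le_rfl
  have hH0 : 0 ≤ H := Finset.sum_nonneg hHterm
  -- one-sided estimate
  have key : ∀ b b' : Fin d → ℝ,
      (∃ p : (Fin d → ℝ) → ℝ,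
        (∀ a ∈ 𝒜, 0 ≤ p a) ∧ (∑ a ∈ 𝒜, p a) = 1 ∧ ∀ i, (∑ a ∈ 𝒜, p a * a i) ≤ b i) →
      (∃ p : (Fin d → ℝ) → ℝ,
        (∀ a ∈ 𝒜, 0 ≤ p a) ∧ (∑ a ∈ 𝒜, p a) = 1 ∧ ∀ i, (∑ a ∈ 𝒜, p a * a i) ≤ b' i) →
      v b ≤ v b' + H * ‖b - b'‖ := by
    intro b b' ⟨p0, hp0⟩ ⟨p1, hp1⟩
    have hSb : (S b).Nonempty := ⟨∑ a ∈ 𝒜, p0 a * Q a, p0, hp0, rfl⟩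
    have hSb' : (S b').Nonempty := ⟨∑ a ∈ 𝒜, p1 a * Q a, p1, hp1, rfl⟩
    rw [hv b, hv b']
    refine csSup_le hSb ?_
    rintro w hw
    refine le_of_forall_pos_le_add ?_
    intro γ hγ
    obtain ⟨p, ⟨hp, hps, hpb⟩, hwp⟩ := hw
    -- membership of (b, w, 1) in the cone
    have hmemb : emb b w 1 ∈ listCone (genList d 𝒜 Q) :=
      (feas_iff d 𝒜 Q b w).2 ⟨p, hp, hps, hpb, le_of_eq hwp⟩
    set V' := sSup (S b') with hV'
    -- (b', V' + γ, 1) is NOT in the cone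
    have hnot : emb b' (V' + γ) 1 ∉ listCone (genList d 𝒜 Q) := by
      intro hmem
      obtain ⟨q, hq, hqs, hqb, hqQ⟩ := (feas_iff d 𝒜 Q b' (V' + γ)).1 hmem
      have h1 : (∑ a ∈ 𝒜, q a * Q a) ∈ S b' := ⟨q, ⟨hq, hqs, hqb⟩, rfl⟩
      have h2 : (∑ a ∈ 𝒜, q a * Q a) ≤ V' := le_csSup (hbdd b') h1
      linarith
    -- get a violated constraint
    rw [hN] at hnot
    push_neg at hnot
    obtain ⟨n, hnN, hn⟩ := hnot
    -- a point of S b' close to the sup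
    have hlt : V' - γ < sSup (S b') := by rw [← hV']; linarith
    obtain ⟨w', hw'S, hw'gt⟩ := exists_lt_of_lt_csSup hSb' hlt
    have hw'le : w' ≤ V' := le_csSup (hbdd b') hw'S
    obtain ⟨p', hp'c, hw'p⟩ := hw'S
    have hmemb' : emb b' w' 1 ∈ listCone (genList d 𝒜 Q) :=
      (feas_iff d 𝒜 Q b' w').2 ⟨p', hp'c.1, hp'c.2.1, hp'c.2.2, le_of_eq hw'p⟩
    -- the three inequalities
    have h1 := (hN _).1 hmemb n hnN
    have h3 := (hN _).1 hmemb' n hnN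
    rw [pdot_emb] at h1 h3 hn
    set A : ℝ := ∑ i, n (Sum.inl i) * b i with hA
    set A' : ℝ := ∑ i, n (Sum.inl i) * b' i with hA'
    set η : ℝ := n (Sum.inr false) with hη
    set cc : ℝ := n (Sum.inr true) with hcc
    -- η > 0
    have hηpos : 0 < η := by
      rcases le_or_gt η 0 with hle | hpos
      · exfalso
        have : η * (V' + γ) ≤ η * w' := by
          apply mul_le_mul_of_nonpos_left _ hle
          linarith
        linarith
      · exact hpos
    -- A' - A ≤ (∑ |n inl i|) * ‖b - b'‖
    have hAA : A' - A ≤ (∑ i, |n (Sum.inl i)|) * ‖b - b'‖ := by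
      rw [hA, hA', ← Finset.sum_sub_distrib, Finset.sum_mul]
      apply Finset.sum_le_sum
      intro i _
      have h4 : n (Sum.inl i) * b' i - n (Sum.inl i) * b i = n (Sum.inl i) * (b' i - b i) := by
        ring
      rw [h4]
      calc n (Sum.inl i) * (b' i - b i) ≤ |n (Sum.inl i) * (b' i - b i)| := le_abs_self _
        _ = |n (Sum.inl i)| * |b' i - b i| := abs_mul _ _
        _ ≤ |n (Sum.inl i)| * ‖b - b'‖ := by
            apply mul_le_mul_of_nonneg_left _ (abs_nonneg _)
            rw [norm_sub_rev b b']
            have := norm_le_pi_norm (b' - b) i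
            simpa [Real.norm_eq_abs] using this
    -- combine
    have hLH : (∑ i, |n (Sum.inl i)|) ≤ H * η := by
      have hsingle : (∑ i, |n (Sum.inl i)|) / η ≤ H := by
        rw [hH]
        have := Finset.single_le_sum hHterm hnN
        simpa [← hη, if_pos hηpos] using this
      rw [div_le_iff₀ hηpos] at hsingle
      linarith [hsingle]
    have hεnn : (0:ℝ) ≤ ‖b - b'‖ := norm_nonneg _
    -- η * w ≤ (A' - A) + (- A' - cc) < (A' - A) + η (V' + γ)
    have hmain : η * w < (∑ i, |n (Sum.inl i)|) * ‖b - b'‖ + η * (V' + γ) := by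
      have e1 : η * w ≤ (A' - A) + (- A' - cc) := by linarith
      have e2 : - A' - cc < η * (V' + γ) := by linarith
      calc η * w ≤ (A' - A) + (- A' - cc) := e1
        _ < (A' - A) + η * (V' + γ) := by linarith
        _ ≤ (∑ i, |n (Sum.inl i)|) * ‖b - b'‖ + η * (V' + γ) := by linarith
    have hfin : η * w < η * (V' + H * ‖b - b'‖ + γ) := by
      have : (∑ i, |n (Sum.inl i)|) * ‖b - b'‖ ≤ (H * η) * ‖b - b'‖ :=
        mul_le_mul_of_nonneg_right hLH hεnn
      nlinarith
    have := (mul_lt_mul_iff_right₀ hηpos).1 hfin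
    linarith
  refine ⟨H, hH0, ?_⟩
  intro b b' hb hb'
  rw [abs_sub_le_iff]
  constructor
  · linarith [key b b' hb hb']
  · have h2 := key b' b hb' hb
    rw [norm_sub_rev] at h2
    linarith
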